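/- Let L be a negative semidefinite self-adjoint operator on a finite-dimensional inner product space, and let X be a unit vector with ⟨X, L X⟩ ≥ -ε for some ε ≥ 0. Then for all t ≥ 0, ⟨X, e^{tL} X⟩ ≥ e^{-εt}. -/

import Mathlib

open scoped Matrix ComplexOrder

/-- If `L` is a self-adjoint negative semidefinite operator (here: a Hermitian
matrix with `-L` positive semidefinite) and `X` is a unit vector with
`⟨X, L X⟩ ≥ -ε`, then `⟨X, e^{tL} X⟩ ≥ e^{-ε t}` for all `t ≥ 0`. -/
theorem stmt0 {n : ℕ} (L : Matrix (Fin n) (Fin n) ℂ)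
    (hHerm : L.IsHermitian) (hNeg : (-L).PosSemidef)
    (X : Fin n → ℂ) (hX : star X ⬝ᵥ X = 1)
    (ε : ℝ) (hε : 0 ≤ ε)
    (hrate : -ε ≤ (star X ⬝ᵥ L.mulVec X).re) :
    ∀ t : ℝ, 0 ≤ t →
      Real.exp (-ε * t) ≤ (star X ⬝ᵥ (NormedSpace.exp (t • L)).mulVec X).re := by
  intro t ht
  classical
  set U : Matrix (Fin n) (Fin n) ℂ := (hHerm.eigenvectorUnitary : Matrix (Fin n) (Fin n) ℂ)
    with hU
  set μ : Fin n → ℝ := hHerm.eigenvalues with hμ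
  set Y : Fin n → ℂ := (star U) *ᵥ X with hY
  set w : Fin n → ℝ := fun i => Complex.normSq (Y i) with hw
  have hUstar : star U * U = 1 := (Unitary.mem_iff.mp hHerm.eigenvectorUnitary.2).1
  have hUstar' : U * star U = 1 := (Unitary.mem_iff.mp hHerm.eigenvectorUnitary.2).2
  have hvecMul : Matrix.vecMul (star X) U = star Y := by
    ext i
    simp only [hY, Matrix.vecMul, Matrix.mulVec, dotProduct, Pi.star_apply,
      Matrix.star_apply, star_sum, star_mul', star_star]
    exact Finset.sum_congr rfl fun j _ => mul_comm _ _
  -- key : conjugation formula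
  have key : ∀ d : Fin n → ℂ,
      star X ⬝ᵥ (U * Matrix.diagonal d * star U) *ᵥ X
        = ∑ i, d i * (w i : ℂ) := by
    intro d
    rw [← Matrix.mulVec_mulVec, ← Matrix.mulVec_mulVec, Matrix.dotProduct_mulVec, hvecMul,
      ← hY]
    simp only [dotProduct, Matrix.mulVec_diagonal, Pi.star_apply, hw]
    refine Finset.sum_congr rfl fun i _ => ?_
    rw [show star (Y i) * (d i * Y i) = d i * (Y i * (starRingEnd ℂ) (Y i)) from by
      rw [Complex.star_def]; ring, Complex.mul_conj]
  -- the weights sum to 1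
  have hwsum : ∑ i, w i = 1 := by
    have h1 : star X ⬝ᵥ (U * Matrix.diagonal (fun _ => (1 : ℂ)) * star U) *ᵥ X = 1 := by
      rw [Matrix.diagonal_one, Matrix.mul_one, hUstar', Matrix.one_mulVec, hX]
    rw [key] at h1
    simp only [one_mul] at h1
    have := congrArg Complex.re h1
    simpa [Complex.re_sum] using this
  have hwpos : ∀ i, 0 ≤ w i := fun i => Complex.normSq_nonneg _
  -- the rate
  have hLspec : L = U * Matrix.diagonal (fun i => (μ i : ℂ)) * star U := by
    have := hHerm.spectral_theorem
    exact this
  have hrate' : -ε ≤ ∑ i, w i * μ i := by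
    have h2 : star X ⬝ᵥ L *ᵥ X = ∑ i, (μ i : ℂ) * (w i : ℂ) := by
      rw [hLspec]; exact key _
    rw [h2] at hrate
    simpa [Complex.re_sum, mul_comm] using hrate
  -- exponential of t • L
  have hUunit : IsUnit U :=
    isUnit_iff_exists.mpr ⟨star U, hUstar', hUstar⟩
  have hUinv : U⁻¹ = star U := Matrix.inv_eq_left_inv hUstar
  have hexp : NormedSpace.exp (t • L)
      = U * Matrix.diagonal (fun i => Complex.exp (t * μ i)) * star U := by
    have htL : t • L = U * Matrix.diagonal (fun i => ((t * μ i : ℝ) : ℂ)) * U⁻¹ := by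
      rw [hUinv, hLspec]
      have hD : (fun i => ((t * μ i : ℝ) : ℂ)) = t • (fun i => ((μ i : ℝ) : ℂ)) := by
        funext i
        simp [Complex.real_smul]
      rw [hD, Matrix.diagonal_smul, Matrix.mul_smul, Matrix.smul_mul]
    have hped : (NormedSpace.exp fun i => ((t * μ i : ℝ) : ℂ))
        = fun i => Complex.exp (t * μ i) := by
      funext i
      rw [Pi.coe_exp, ← Complex.exp_eq_exp_ℂ]
      push_cast
      ring_nf
    rw [htL, Matrix.exp_conj _ _ hUunit, Matrix.exp_diagonal, hped, hUinv]
  have hfinal : (star X ⬝ᵥ (NormedSpace.exp (t • L)).mulVec X).re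
      = ∑ i, w i * Real.exp (t * μ i) := by
    rw [hexp, key]
    rw [Complex.re_sum]
    refine Finset.sum_congr rfl fun i _ => ?_
    rw [show ((t : ℂ)) * ((μ i : ℝ) : ℂ) = (((t * μ i : ℝ)) : ℂ) by push_cast; ring,
      ← Complex.ofReal_exp, ← Complex.ofReal_mul, Complex.ofReal_re, mul_comm]
  rw [hfinal]
  -- Jensen's inequality
  have hjensen : Real.exp (∑ i, w i • (t * μ i)) ≤ ∑ i, w i • Real.exp (t * μ i) :=
    convexOn_exp.map_sum_le (fun i _ => hwpos i) (by simpa using hwsum)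
      (fun i _ => Set.mem_univ _)
  calc Real.exp (-ε * t) ≤ Real.exp (∑ i, w i • (t * μ i)) := by
        apply Real.exp_le_exp.mpr
        have : ∑ i, w i • (t * μ i) = t * ∑ i, w i * μ i := by
          rw [Finset.mul_sum]
          exact Finset.sum_congr rfl fun i _ => by simp [smul_eq_mul]; ring
        rw [this]
        calc -ε * t = t * (-ε) := by ring
          _ ≤ t * ∑ i, w i * μ i := by
              exact mul_le_mul_of_nonneg_left hrate' ht
    _ ≤ ∑ i, w i • Real.exp (t * μ i) := hjensen
    _ = ∑ i, w i * Real.exp (t * μ i) := by simp [smul_eq_mul]
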